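/- arXiv:1705.10595 — 4 statements merged into one kernel-verified Lean document; each statement's English description precedes it below -/
import Mathlib

section
/- Serial composition of constructions (Theorem 'composability', part 1): Assume every converter in Σ_H and in Σ_E is contractive, Σ_H and Σ_E are each closed under composition of maps, Σ_E contains the identity map, and every π ∈ Σ_H commutes with every σ ∈ Σ_E (π ∘ σ = σ ∘ π as maps Φ → Φ). If γ ∈ Σ_H constructs the specification S from the specification R with error ε, and π ∈ Σ_H constructs the specification T from S with error δ, then π ∘ γ ∈ Σ_H constructs T from R with error ε + δ. -/
/-- A pseudo-metric on the type of atomic resources. -/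
structure IsPseudoMetric {Φ : Type*} (d : Φ → Φ → ℝ) : Prop where
  nonneg : ∀ r s, 0 ≤ d r s
  refl : ∀ r, d r r = 0
  symm : ∀ r s, d r s = d s r
  triangle : ∀ r s t, d r t ≤ d r s + d s t

/-- The ε-ball around a specification R. -/
def specBall {Φ : Type*} (d : Φ → Φ → ℝ) (R : Set Φ) (ε : ℝ) : Set Φ :=
  {s | ∃ r ∈ R, d r s ≤ ε}

/-- A converter is contractive if it cannot increase the distance. -/
def Contractive {Φ : Type*} (d : Φ → Φ → ℝ) (α : Φ → Φ) : Prop :=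
  ∀ r s, d (α r) (α s) ≤ d r s

/-- S* := the set of all σ s for σ a simulator and s ∈ S. -/
def specStar {Φ : Type*} (SimE : Set (Φ → Φ)) (S : Set Φ) : Set Φ :=
  {t | ∃ σ ∈ SimE, ∃ s ∈ S, t = σ s}

/-- π constructs S from R with error ε: πR ⊆ (S*)^ε. -/
def Constructs {Φ : Type*} (d : Φ → Φ → ℝ) (SimE : Set (Φ → Φ))
    (π : Φ → Φ) (R S : Set Φ) (ε : ℝ) : Prop :=
  π '' R ⊆ specBall d (specStar SimE S) ε

/-- Serial composition of constructions. -/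
theorem serial_composition {Φ : Type*} (d : Φ → Φ → ℝ) (hd : IsPseudoMetric d)
    (ProtH SimE : Set (Φ → Φ))
    (hHcontr : ∀ α ∈ ProtH, Contractive d α)
    (hEcontr : ∀ σ ∈ SimE, Contractive d σ)
    (hHcomp : ∀ α ∈ ProtH, ∀ β ∈ ProtH, (α ∘ β) ∈ ProtH)
    (hEcomp : ∀ σ ∈ SimE, ∀ τ ∈ SimE, (σ ∘ τ) ∈ SimE)
    (hEid : (id : Φ → Φ) ∈ SimE)
    (hcomm : ∀ π ∈ ProtH, ∀ σ ∈ SimE, π ∘ σ = σ ∘ π)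
    (γ π : Φ → Φ) (hγ : γ ∈ ProtH) (hπ : π ∈ ProtH)
    (R S T : Set Φ) (ε δ : ℝ) (hε : 0 ≤ ε) (hδ : 0 ≤ δ)
    (h1 : Constructs d SimE γ R S ε) (h2 : Constructs d SimE π S T δ) :
    (π ∘ γ) ∈ ProtH ∧ Constructs d SimE (π ∘ γ) R T (ε + δ) := by
  refine ⟨hHcomp π hπ γ hγ, ?_⟩
  rintro _ ⟨r, hr, rfl⟩
  obtain ⟨_, ⟨σ, hσ, s, hs, rfl⟩, hd1⟩ := h1 ⟨r, hr, rfl⟩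
  obtain ⟨_, ⟨τ, hτ, t, ht, rfl⟩, hd2⟩ := h2 ⟨s, hs, rfl⟩
  refine ⟨(σ ∘ τ) t, ⟨σ ∘ τ, hEcomp σ hσ τ hτ, t, ht, rfl⟩, ?_⟩
  have key : π (σ s) = σ (π s) := congrFun (hcomm π hπ σ hσ) s
  calc d ((σ ∘ τ) t) ((π ∘ γ) r)
      ≤ d (σ (τ t)) (σ (π s)) + d (σ (π s)) (π (γ r)) :=
        hd.triangle _ _ _
    _ ≤ δ + ε := by
        refine add_le_add (le_trans (hEcontr σ hσ (τ t) (π s)) hd2) ?_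
        rw [← key]
        exact le_trans (hHcontr π hπ (σ s) (γ r)) hd1
    _ = ε + δ := add_comm _ _
end

section
/- Parallel composition of constructions (Theorem 'composability', part 2): Assume d is context-insensitive, and that for all γ₁, γ₂ ∈ Σ_H there exists a converter γ₁|γ₂ ∈ Σ_H with (γ₁|γ₂)(r ∥ s) = (γ₁ r) ∥ (γ₂ s) for all r,s ∈ Φ, and likewise for all σ₁, σ₂ ∈ Σ_E there exists σ₁|σ₂ ∈ Σ_E with (σ₁|σ₂)(r ∥ s) = (σ₁ r) ∥ (σ₂ s) for all r,s ∈ Φ. If γ₁ ∈ Σ_H constructs S₁ from R₁ with error ε₁ and γ₂ ∈ Σ_H constructs S₂ from R₂ with error ε₂, then γ₁|γ₂ constructs S₁ ∥ S₂ from R₁ ∥ R₂ with error ε₁ + ε₂. -/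
/-- The pseudo-metric d is context-insensitive with respect to ∥. -/
def ContextInsensitive {Φ : Type*} (d : Φ → Φ → ℝ) (par : Φ → Φ → Φ) : Prop :=
  ∀ r s t, d (par r t) (par s t) ≤ d r s ∧ d (par t r) (par t s) ≤ d r s

/-- Parallel composition of specifications: R ∥ S := {r ∥ s : r ∈ R, s ∈ S}. -/
def parSet {Φ : Type*} (par : Φ → Φ → Φ) (R S : Set Φ) : Set Φ :=
  {t | ∃ r ∈ R, ∃ s ∈ S, t = par r s}

/-- Parallel composition of constructions. -/
theorem parallel_composition {Φ : Type*} (d : Φ → Φ → ℝ) (hd : IsPseudoMetric d)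
    (par : Φ → Φ → Φ) (hci : ContextInsensitive d par)
    (ProtH SimE : Set (Φ → Φ))
    (hEpar : ∀ σ₁ ∈ SimE, ∀ σ₂ ∈ SimE, ∃ σ ∈ SimE,
      ∀ r s, σ (par r s) = par (σ₁ r) (σ₂ s))
    (γ₁ γ₂ : Φ → Φ) (hγ₁ : γ₁ ∈ ProtH) (hγ₂ : γ₂ ∈ ProtH)
    (g : Φ → Φ) (hg : g ∈ ProtH) (hgpar : ∀ r s, g (par r s) = par (γ₁ r) (γ₂ s))
    (R₁ R₂ S₁ S₂ : Set Φ) (ε₁ ε₂ : ℝ) (hε₁ : 0 ≤ ε₁) (hε₂ : 0 ≤ ε₂)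
    (h1 : Constructs d SimE γ₁ R₁ S₁ ε₁) (h2 : Constructs d SimE γ₂ R₂ S₂ ε₂) :
    Constructs d SimE g (parSet par R₁ R₂) (parSet par S₁ S₂) (ε₁ + ε₂) := by
  rintro x ⟨t, ⟨r, hr, s, hs, rfl⟩, rfl⟩
  obtain ⟨u₁, ⟨σ₁, hσ₁, s₁, hs₁, rfl⟩, hd₁⟩ := h1 ⟨r, hr, rfl⟩
  obtain ⟨u₂, ⟨σ₂, hσ₂, s₂, hs₂, rfl⟩, hd₂⟩ := h2 ⟨s, hs, rfl⟩
  obtain ⟨σ, hσ, hσpar⟩ := hEpar σ₁ hσ₁ σ₂ hσ₂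
  refine ⟨σ (par s₁ s₂), ⟨σ, hσ, par s₁ s₂, ⟨s₁, hs₁, s₂, hs₂, rfl⟩, rfl⟩, ?_⟩
  rw [hσpar, hgpar]
  calc d (par (σ₁ s₁) (σ₂ s₂)) (par (γ₁ r) (γ₂ s))
      ≤ d (par (σ₁ s₁) (σ₂ s₂)) (par (γ₁ r) (σ₂ s₂))
        + d (par (γ₁ r) (σ₂ s₂)) (par (γ₁ r) (γ₂ s)) :=
      hd.triangle _ _ _
    _ ≤ ε₁ + ε₂ := add_le_add ((hci _ _ _).1.trans hd₁) ((hci _ _ _).2.trans hd₂)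
end

section
/- Entropy of a key patched with a fresh uniform key (core of the lemma on continuing after a reject): Let n, k ≥ 0, let σ = (σ_θ)_{θ∈{0,1}^n} be a family of positive semidefinite dE×dE matrices with p_guess(Θ|E)_σ ≤ 2^{−k}, and let μ be a positive semidefinite dE×dE matrix with tr(μ) ≤ 1. Define ρ'_θ := 2^{−n} μ + σ_θ for each θ ∈ {0,1}^n. Then p_guess(Θ|E)_{ρ'} ≤ 2^{−n} + 2^{−k}; equivalently, H_min(Θ|E)_{ρ'} ≥ −log₂(2^{−n} + 2^{−k}). -/
noncomputable section
open Matrix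
open scoped ComplexOrder

/-- The guessing probability p_guess(X|E)_ρ: supremum over POVMs (Γ_x)_x of ∑_x tr(Γ_x ρ_x). -/
def pGuess {X E : Type*} [Fintype X] [Fintype E] [DecidableEq E]
    (ρ : X → Matrix E E ℂ) : ℝ :=
  sSup {p : ℝ | ∃ Γ : X → Matrix E E ℂ,
    (∀ x, (Γ x).PosSemidef) ∧ (∑ x, Γ x = 1) ∧ p = ∑ x, ((Γ x * ρ x).trace).re}

set_option linter.unusedVariables false

open scoped MatrixOrder in
def Matrix.PosSemidef.sqrt {d : ℕ} {B : Matrix (Fin d) (Fin d) ℂ} (hB : B.PosSemidef) :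
    Matrix (Fin d) (Fin d) ℂ := CFC.sqrt B

open scoped MatrixOrder in
lemma Matrix.PosSemidef.posSemidef_sqrt {d : ℕ} {B : Matrix (Fin d) (Fin d) ℂ}
    (hB : B.PosSemidef) : hB.sqrt.PosSemidef :=
  Matrix.nonneg_iff_posSemidef.mp (CFC.sqrt_nonneg B)

open scoped MatrixOrder in
lemma Matrix.PosSemidef.sqrt_mul_self {d : ℕ} {B : Matrix (Fin d) (Fin d) ℂ}
    (hB : B.PosSemidef) : hB.sqrt * hB.sqrt = B :=
  CFC.sqrt_mul_sqrt_self B (Matrix.nonneg_iff_posSemidef.mpr hB)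

lemma trace_mul_re_nonneg' {d : ℕ} {A B : Matrix (Fin d) (Fin d) ℂ}
    (hA : A.PosSemidef) (hB : B.PosSemidef) : 0 ≤ ((A * B).trace).re := by
  have hS := hB.posSemidef_sqrt
  have h1 : A * B = A * hB.sqrt * hB.sqrt := by
    rw [mul_assoc, hB.sqrt_mul_self]
  have h3 : (hB.sqrt * A * hB.sqrt).PosSemidef := by
    have := hA.conjTranspose_mul_mul_same hB.sqrt
    rwa [hS.isHermitian.eq] at this
  have h4 : 0 ≤ ((hB.sqrt * A * hB.sqrt).trace).re := by
    rw [Matrix.trace]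
    simp only [Complex.re_sum]
    apply Finset.sum_nonneg
    intro i _
    have := h3.re_dotProduct_nonneg (Pi.single i 1)
    simpa [Matrix.diag, Matrix.mulVec_single, dotProduct, Pi.single_apply,
      Finset.sum_ite_eq'] using this
  rw [h1, Matrix.trace_mul_cycle]; exact h4

lemma posSemidef_zero' {d : ℕ} : (0 : Matrix (Fin d) (Fin d) ℂ).PosSemidef :=
  ⟨Matrix.isHermitian_zero, fun x => by simp⟩

lemma povm_le_one' {d : ℕ} {X : Type*} [Fintype X] [DecidableEq X]
    (Γ : X → Matrix (Fin d) (Fin d) ℂ) (hpsd : ∀ x, (Γ x).PosSemidef)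
    (hsum : ∑ x, Γ x = 1) (θ : X) : (1 - Γ θ).PosSemidef := by
  have h := Finset.add_sum_erase Finset.univ Γ (Finset.mem_univ θ)
  rw [hsum] at h
  have : (1 : Matrix (Fin d) (Fin d) ℂ) - Γ θ = ∑ x ∈ Finset.univ.erase θ, Γ x := by
    rw [← h]; abel
  rw [this]
  apply Finset.sum_induction _ _ (fun a b ha hb => ha.add hb) posSemidef_zero'
  exact fun x _ => hpsd x

lemma pGuess_bddAbove' {d : ℕ} {X : Type*} [Fintype X] [DecidableEq X]
    (ρ : X → Matrix (Fin d) (Fin d) ℂ) (hρ : ∀ x, (ρ x).PosSemidef) :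
    BddAbove {p : ℝ | ∃ Γ : X → Matrix (Fin d) (Fin d) ℂ,
      (∀ x, (Γ x).PosSemidef) ∧ (∑ x, Γ x = 1) ∧ p = ∑ x, ((Γ x * ρ x).trace).re} := by
  refine ⟨∑ x, ((ρ x).trace).re, ?_⟩
  rintro p ⟨Γ, hpsd, hsum, rfl⟩
  apply Finset.sum_le_sum
  intro x _
  have h := trace_mul_re_nonneg' (povm_le_one' Γ hpsd hsum x) (hρ x)
  rw [sub_mul, one_mul, Matrix.trace_sub, Complex.sub_re] at h
  linarith

/-- Entropy of a key patched with a fresh uniform key: if p_guess(Θ|E)_σ ≤ 2^{-k}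
and ρ'_θ := 2^{-n} μ + σ_θ, then p_guess(Θ|E)_{ρ'} ≤ 2^{-n} + 2^{-k}. -/
theorem pGuess_patched_key {dE n : ℕ} (k : ℝ) (hk : 0 ≤ k)
    (σ : (Fin n → Bool) → Matrix (Fin dE) (Fin dE) ℂ)
    (hσpsd : ∀ θ, (σ θ).PosSemidef)
    (hσguess : pGuess σ ≤ (2 : ℝ) ^ (-k))
    (μ : Matrix (Fin dE) (Fin dE) ℂ) (hμpsd : μ.PosSemidef)
    (hμtr : μ.trace.re ≤ 1) :
    pGuess (fun θ => ((2 : ℂ) ^ n)⁻¹ • μ + σ θ) ≤ ((2 : ℝ) ^ n)⁻¹ + (2 : ℝ) ^ (-k) := by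
  unfold pGuess
  apply Real.sSup_le
  · rintro p ⟨Γ, hpsd, hsum, rfl⟩
    have split : ∀ θ, ((Γ θ * (((2 : ℂ) ^ n)⁻¹ • μ + σ θ)).trace).re
        = ((Γ θ * (((2 : ℂ) ^ n)⁻¹ • μ)).trace).re + ((Γ θ * σ θ).trace).re := by
      intro θ
      rw [mul_add, Matrix.trace_add, Complex.add_re]
    simp only [split]
    rw [Finset.sum_add_distrib]
    have h1 : ∑ θ : Fin n → Bool, ((Γ θ * (((2 : ℂ) ^ n)⁻¹ • μ)).trace).re
        = ((2 : ℝ) ^ n)⁻¹ * μ.trace.re := by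
      rw [← Complex.re_sum, ← Matrix.trace_sum, ← Finset.sum_mul, hsum, one_mul,
        Matrix.trace_smul]
      have hc : ((2 : ℂ) ^ n)⁻¹ = ((((2 : ℝ) ^ n)⁻¹ : ℝ) : ℂ) := by push_cast; ring
      rw [hc, smul_eq_mul, Complex.re_ofReal_mul]
    have h2 : ∑ θ : Fin n → Bool, ((Γ θ * σ θ).trace).re ≤ (2 : ℝ) ^ (-k) := by
      refine le_trans ?_ hσguess
      unfold pGuess
      exact le_csSup (pGuess_bddAbove' σ hσpsd) ⟨Γ, hpsd, hsum, rfl⟩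
    have h3 : ((2 : ℝ) ^ n)⁻¹ * μ.trace.re ≤ ((2 : ℝ) ^ n)⁻¹ := by
      have : (0:ℝ) ≤ ((2 : ℝ) ^ n)⁻¹ := by positivity
      nlinarith
    rw [h1]; linarith
  · positivity


end
end

section
/- Absorption of simulators into smeared ideal specifications (key step in the proof of the composition theorem): Suppose Σ_E contains the identity map, is closed under composition of maps, and every σ ∈ Σ_E is contractive. Then for every specification T ⊆ Φ and every δ ≥ 0, ((T*)^δ)* ⊆ (T*)^δ. -/
/-- Absorption of simulators into smeared ideal specifications: ((T*)^δ)* ⊆ (T*)^δ. -/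
theorem star_ball_star_subset {Φ : Type*} (d : Φ → Φ → ℝ) (hd : IsPseudoMetric d)
    (SimE : Set (Φ → Φ))
    (hEid : (id : Φ → Φ) ∈ SimE)
    (hEcomp : ∀ σ ∈ SimE, ∀ τ ∈ SimE, (σ ∘ τ) ∈ SimE)
    (hEcontr : ∀ σ ∈ SimE, Contractive d σ)
    (T : Set Φ) (δ : ℝ) (hδ : 0 ≤ δ) :
    specStar SimE (specBall d (specStar SimE T) δ) ⊆ specBall d (specStar SimE T) δ := by
  rintro x ⟨σ, hσ, s, ⟨r, ⟨τ, hτ, t, ht, rfl⟩, hdist⟩, rfl⟩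
  refine ⟨σ (τ t), ⟨σ ∘ τ, hEcomp σ hσ τ hτ, t, ht, rfl⟩, ?_⟩
  exact le_trans (hEcontr σ hσ _ _) hdist
end
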